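/- Let 1 ≤ j ≤ k−1. For every natural number m with m < p^{k−j} and every x ∈ R, one has φ_{p^j·m}(p^j·x) = φ_m(x) (the product p^j·x computed in R = ℤ/p^kℤ). Moreover, for any natural number m not divisible by p^j and any x ∈ R, φ_m(p^j·x) = 0. -/
import Mathlib

open Finset

/-- The binomial phi function `φ_m : ℤ/p^kℤ → ℤ/pℤ`, `φ_m(x) = C(x̄, m) mod p`. -/
def phi (p k m : ℕ) (x : ZMod (p ^ k)) : ZMod p := (x.val.choose m : ZMod p)

/-- Lucas-type decomposition, cast to `ZMod p`. -/
lemma lucas_key (p : ℕ) [Fact p.Prime] (a n m : ℕ) :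
    ((n.choose m : ZMod p)) = ((n / p ^ a).choose (m / p ^ a) : ZMod p) *
      ∏ i ∈ range a, ((n / p ^ i % p).choose (m / p ^ i % p) : ZMod p) := by
  have h := Choose.choose_modEq_choose_mul_prod_range_choose (p := p) (n := n) (k := m) a
  have h2 := (ZMod.intCast_eq_intCast_iff _ _ _).mpr h
  push_cast at h2
  exact_mod_cast h2

lemma val_pj_mul (p k j : ℕ) [Fact p.Prime] (hjk : j ≤ k) (hk : k ≠ 0) (x : ZMod (p ^ k)) :
    ((p ^ j : ZMod (p ^ k)) * x).val = p ^ j * (x.val % p ^ (k - j)) := by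
  haveI : NeZero (p ^ k) := ⟨pow_ne_zero _ (Fact.out (p := p.Prime)).ne_zero⟩
  have hx : ((x.val : ℕ) : ZMod (p ^ k)) = x := ZMod.natCast_rightInverse x
  have : (p ^ j : ZMod (p ^ k)) * x = ((p ^ j * x.val : ℕ) : ZMod (p ^ k)) := by
    push_cast [hx]
    ring
  have hpk : p ^ k = p ^ j * p ^ (k - j) := by rw [← pow_add, Nat.add_sub_cancel' hjk]
  rw [this, ZMod.val_natCast]
  set v := x.val with hv
  rw [hpk, Nat.mul_mod_mul_left]

lemma digit_mod (p a e i : ℕ) (hp : 1 ≤ p) (hie : i < e) :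
    (a % p ^ e) / p ^ i % p = a / p ^ i % p := by
  have he : p ^ e = p ^ i * p ^ (e - i) := by
    rw [← pow_add, Nat.add_sub_cancel' hie.le]
  rw [he, Nat.mod_mul_right_div_self]
  have hd : p ∣ p ^ (e - i) := dvd_pow_self p (by omega)
  exact Nat.mod_mod_of_dvd _ hd

/-- For `1 ≤ j ≤ k−1`: if `m < p^{k−j}` then
`φ_{p^j·m}(p^j·x) = φ_m(x)` for all `x ∈ R`; and if `p^j ∤ m` then `φ_m(p^j·x) = 0`. -/
theorem stmt_9 (p k j : ℕ) [Fact p.Prime] (hj1 : 1 ≤ j) (hj2 : j ≤ k - 1) :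
    (∀ m < p ^ (k - j), ∀ x : ZMod (p ^ k),
      phi p k (p ^ j * m) ((p ^ j : ZMod (p ^ k)) * x) = phi p k m x) ∧
    (∀ m : ℕ, ¬ (p ^ j ∣ m) → ∀ x : ZMod (p ^ k),
      phi p k m ((p ^ j : ZMod (p ^ k)) * x) = 0) := by
  have hp := (Fact.out (p := p.Prime))
  have hp1 : 1 ≤ p := hp.one_lt.le
  have hk : k ≠ 0 := by omega
  have hjk : j ≤ k := by omega
  constructor
  · intro m hm x
    rw [phi, phi, val_pj_mul p k j hjk hk x]
    set r := x.val % p ^ (k - j) with hr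
    have hrlt : r < p ^ (k - j) := Nat.mod_lt _ (pow_pos hp.pos _)
    -- step 1: C(p^j r, p^j m) ≡ C(r,m)
    have h1 : (((p ^ j * r).choose (p ^ j * m) : ZMod p)) = (r.choose m : ZMod p) := by
      rw [lucas_key p j]
      rw [Nat.mul_div_cancel_left _ (pow_pos hp.pos j),
        Nat.mul_div_cancel_left _ (pow_pos hp.pos j)]
      have : ∀ i ∈ range j, ((p ^ j * r / p ^ i % p).choose (p ^ j * m / p ^ i % p) : ZMod p)
          = 1 := by
        intro i hi
        rw [mem_range] at hi
        have hdvd : ∀ b : ℕ, p ^ j * b / p ^ i % p = 0 := by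
          intro b
          have : p ^ j * b / p ^ i = p ^ (j - i) * b := by
            rw [show p ^ j = p ^ i * p ^ (j - i) by rw [← pow_add, Nat.add_sub_cancel' hi.le],
              mul_assoc, Nat.mul_div_cancel_left _ (pow_pos hp.pos i)]
          rw [this, Nat.mul_mod, Nat.pow_mod, Nat.mod_self, Nat.zero_pow (by omega)]
          simp
        rw [hdvd r, hdvd m]
        simp
      rw [Finset.prod_congr rfl this]
      simp
    -- step 2: C(r,m) ≡ C(x.val, m)
    have h2 : ((r.choose m : ZMod p)) = (x.val.choose m : ZMod p) := by
      rw [lucas_key p (k - j) r m, lucas_key p (k - j) x.val m]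
      rw [Nat.div_eq_of_lt hrlt, Nat.div_eq_of_lt hm]
      congr 1
      · simp [Nat.choose]
      · apply Finset.prod_congr rfl
        intro i hi
        rw [mem_range] at hi
        rw [hr, digit_mod p x.val (k - j) i hp1 hi]
    rw [h1, h2]
  · intro m hpm x
    rw [phi, val_pj_mul p k j hjk hk x]
    set r := x.val % p ^ (k - j) with hr
    -- there is a digit i < j of m that is nonzero
    have hdig : ∃ i < j, m / p ^ i % p ≠ 0 := by
      by_contra h
      push_neg at h
      apply hpm
      have key : ∀ i, i ≤ j → p ^ i ∣ m := by
        intro i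
        induction i with
        | zero => simp
        | succ i ih =>
          intro hij
          obtain ⟨c, hc⟩ := ih (by omega)
          have hz := h i (by omega)
          have hpc : p ∣ m / p ^ i := Nat.dvd_of_mod_eq_zero hz
          rw [hc, Nat.mul_div_cancel_left _ (pow_pos hp.pos i)] at hpc
          obtain ⟨d, hd⟩ := hpc
          exact ⟨d, by rw [hc, hd, pow_succ]; ring⟩
      exact key j le_rfl
    obtain ⟨i, hij, hdi⟩ := hdig
    rw [lucas_key p j]
    have hzero : ((p ^ j * r / p ^ i % p).choose (m / p ^ i % p) : ZMod p) = 0 := by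
      have : p ^ j * r / p ^ i = p ^ (j - i) * r := by
        rw [show p ^ j = p ^ i * p ^ (j - i) by rw [← pow_add, Nat.add_sub_cancel' hij.le],
          mul_assoc, Nat.mul_div_cancel_left _ (pow_pos hp.pos i)]
      rw [this, Nat.mul_mod, Nat.pow_mod, Nat.mod_self, Nat.zero_pow (by omega)]
      simp only [Nat.zero_mod, zero_mul]
      rw [Nat.choose_eq_zero_of_lt (by omega)]
      simp
    rw [Finset.prod_eq_zero (mem_range.mpr hij) hzero, mul_zero]
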